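/- Let 𝔪 be a Lie algebra over a field k of characteristic 0, graded by negative integers, 𝔪 = ⊕_{i≥1} 𝔪_{-i}, generated by 𝔪_{-1}, and assume 𝔪 is non-degenerate (i.e., no non-zero element of 𝔪_{-1} lies in the center of 𝔪). If there exists a degree-preserving derivation d of 𝔪 with d(𝔪_{-i}) = 0 for all i ≥ 2 and rank d = 1 (as a linear map), then there exists a non-zero element y ∈ 𝔪_{-1} such that the adjoint map ad y : 𝔪 → 𝔪 has rank 1. -/

import Mathlib

open Module LinearMap

/-- A non-degenerate graded nilpotent Lie algebra admitting a
degree-preserving derivation `d` vanishing on all `𝔪_{-i}`, `i ≥ 2`, of rank 1,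
has an element `y ∈ 𝔪_{-1}`, `y ≠ 0`, with `rank (ad y) = 1`. -/
theorem stmt0 {k L : Type*} [Field k] [CharZero k] [LieRing L] [LieAlgebra k L]
    (m : ℕ → Submodule k L)
    (hsum : DirectSum.IsInternal fun i => m i)
    (h0 : m 0 = ⊥)
    (μ : ℕ) (hdepth : ∀ i, μ < i → m i = ⊥)
    (hbr : ∀ i j, ∀ x ∈ m i, ∀ y ∈ m j, ⁅x, y⁆ ∈ m (i + j))
    (hgen : ∀ i, 1 ≤ i →
      m (i + 1) = Submodule.span k {z | ∃ u ∈ m 1, ∃ v ∈ m i, ⁅u, v⁆ = z})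
    (hnd : ∀ y ∈ m 1, (∀ z : L, ⁅y, z⁆ = 0) → y = 0)
    (d : L →ₗ[k] L)
    (hder : ∀ a b : L, d ⁅a, b⁆ = ⁅d a, b⁆ + ⁅a, d b⁆)
    (hpres : ∀ i, ∀ x ∈ m i, d x ∈ m i)
    (hvan : ∀ i, 2 ≤ i → ∀ x ∈ m i, d x = 0)
    (hrk : finrank k (LinearMap.range d) = 1) :
    ∃ y ∈ m 1, y ≠ 0 ∧
      finrank k (LinearMap.range (LieAlgebra.ad k L y)) = 1 := by
  have htop : ∀ a : L, a ∈ ⨆ i, m i := by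
    intro a
    rw [hsum.submodule_iSup_eq_top]
    trivial
  -- `d` maps everything into `m 1`
  have hdmem : ∀ a : L, d a ∈ m 1 := by
    intro a
    refine Submodule.iSup_induction (motive := fun b => d b ∈ m 1) m (htop a) ?_ (by simp) ?_
    · intro i x hx
      match i with
      | 0 => rw [h0] at hx; rw [Submodule.mem_bot] at hx; simp [hx]
      | 1 => exact hpres 1 x hx
      | (n+2) => rw [hvan (n+2) (by omega) x hx]; exact Submodule.zero_mem _
    · intro a b ha hb
      rw [map_add]
      exact Submodule.add_mem _ ha hb
  -- choose a generator `y` of the range of `d`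
  obtain ⟨y0, hy0ne, hy0span⟩ := finrank_eq_one_iff'.mp hrk
  set y : L := (y0 : L) with hy_def
  have hyne : y ≠ 0 := fun h => hy0ne (Subtype.ext h)
  obtain ⟨a0, ha0⟩ := y0.2
  have hy1 : y ∈ m 1 := by rw [hy_def, ← ha0]; exact hdmem a0
  have hscal : ∀ u : L, u ∈ LinearMap.range d → ∃ c : k, c • y = u := by
    intro u hu
    obtain ⟨c, hc⟩ := hy0span ⟨u, hu⟩
    exact ⟨c, congrArg Subtype.val hc⟩
  -- find `x ∈ m 1` with `d x = y`
  have hxgen : ∀ a : L, ∃ x ∈ m 1, d x = d a := by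
    intro a
    refine Submodule.iSup_induction (motive := fun b => ∃ x ∈ m 1, d x = d b) m (htop a) ?_
      ⟨0, Submodule.zero_mem _, by simp⟩ ?_
    · intro i w hw
      match i with
      | 0 =>
        rw [h0, Submodule.mem_bot] at hw
        exact ⟨0, Submodule.zero_mem _, by simp [hw]⟩
      | 1 => exact ⟨w, hw, rfl⟩
      | (n+2) =>
        exact ⟨0, Submodule.zero_mem _, by rw [hvan (n+2) (by omega) w hw]; simp⟩
    · rintro a b ⟨x1, hx1, e1⟩ ⟨x2, hx2, e2⟩
      exact ⟨x1 + x2, Submodule.add_mem _ hx1 hx2, by rw [map_add, map_add, e1, e2]⟩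
  obtain ⟨x, hx1, hdx0⟩ := hxgen a0
  have hdx : d x = y := by rw [hdx0, ha0, hy_def]
  set z : L := ⁅x, y⁆ with hz_def
  -- key fact A: bracket of y with m 1 lands in span {z}
  have hA : ∀ v ∈ m 1, ⁅y, v⁆ ∈ Submodule.span k {z} := by
    intro v hv
    have hxv : ⁅x, v⁆ ∈ m 2 := hbr 1 1 x hx1 v hv
    have h2 : (0 : L) = ⁅y, v⁆ + ⁅x, d v⁆ := by
      rw [← hdx, ← hder x v, hvan 2 le_rfl _ hxv]
    obtain ⟨c, hc⟩ := hscal (d v) ⟨v, rfl⟩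
    have : ⁅y, v⁆ = (-c) • z := by
      have := (eq_neg_of_add_eq_zero_left h2.symm)
      rw [this, ← hc, lie_smul, hz_def, neg_smul]
    rw [this]
    exact Submodule.smul_mem _ _ (Submodule.mem_span_singleton_self z)
  -- key fact B: y brackets to zero with m i for i ≥ 2
  have hB : ∀ i, 2 ≤ i → ∀ w ∈ m i, ⁅y, w⁆ = 0 := by
    intro i hi w hw
    have hxw : ⁅x, w⁆ ∈ m (1 + i) := hbr 1 i x hx1 w hw
    have h2 : (0 : L) = ⁅y, w⁆ + ⁅x, d w⁆ := by
      rw [← hdx, ← hder x w, hvan (1 + i) (by omega) _ hxw]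
    rw [hvan i hi w hw, lie_zero, add_zero] at h2
    exact h2.symm
  -- all brackets with y land in span {z}
  have hle : ∀ w : L, ⁅y, w⁆ ∈ Submodule.span k {z} := by
    intro w
    refine Submodule.iSup_induction (motive := fun b => ⁅y, b⁆ ∈ Submodule.span k {z}) m (htop w) ?_
      (by simp) ?_
    · intro i w hw
      match i with
      | 0 =>
        rw [h0, Submodule.mem_bot] at hw
        simp [hw]
      | 1 => exact hA w hw
      | (n+2) =>
        rw [hB (n+2) (by omega) w hw]
        exact Submodule.zero_mem _
    · intro a b ha hb
      rw [lie_add]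
      exact Submodule.add_mem _ ha hb
  -- z ≠ 0
  have hz : z ≠ 0 := by
    intro hz0
    apply hyne
    apply hnd y hy1
    intro w
    have := hle w
    rwa [hz0, Submodule.span_zero_singleton, Submodule.mem_bot] at this
  -- range of ad y equals span {z}
  have hrange : LinearMap.range (LieAlgebra.ad k L y) = Submodule.span k {z} := by
    apply le_antisymm
    · rintro _ ⟨w, rfl⟩
      exact hle w
    · rw [Submodule.span_singleton_le_iff_mem]
      refine ⟨-x, ?_⟩
      rw [LieAlgebra.ad_apply, lie_neg, ← lie_skew]
      simp [hz_def]
  refine ⟨y, hy1, hyne, ?_⟩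
  rw [hrange]
  exact finrank_span_singleton hz
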